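/- Let S_E be a schema containing the distinguished binary relation eq. For every S_E-instance I and every g ≥ 0, there exists an S_E-instance I^g whose girth exceeds g such that for every CSP template T over S_E that has equality, I^g homomorphically maps to T if and only if I homomorphically maps to T. -/

import Mathlib

namespace DDLogPaper

/-! ### Basic objects: constants, facts, schemas, instances, homomorphisms -/

/-- The fixed countably infinite set of constants. -/
abbrev Const := ℕ
/-- Variables. -/
abbrev Var := ℕ
/-- Relation symbols. -/
abbrev RelSym := ℕ

/-- A fact: a relation symbol applied to a tuple of constants. -/
structure Fact where
  rel : RelSym
  args : List Const
deriving DecidableEq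

/-- A schema: a finite set of relation symbols, each with an arity. -/
structure Schema where
  rels : Finset RelSym
  arity : RelSym → ℕ

/-- An instance is a finite set of facts. -/
abbrev Inst := Finset Fact

/-- `I` is an instance over schema `S`. -/
def Schema.IsInstance (S : Schema) (I : Inst) : Prop :=
  ∀ f ∈ I, f.rel ∈ S.rels ∧ f.args.length = S.arity f.rel

/-- The active domain of an instance. -/
def adom (I : Inst) : Finset Const :=
  I.biUnion (fun f => f.args.toFinset)

/-- `h` is a homomorphism from `I` to `J`. -/
def IsHom (h : Const → Const) (I J : Inst) : Prop :=
  ∀ f ∈ I, (⟨f.rel, f.args.map h⟩ : Fact) ∈ J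

/-- There is a homomorphism from `I` to `J`. -/
def HomTo (I J : Inst) : Prop := ∃ h, IsHom h I J

/-! ### Girth -/

/-- `I` has a cycle of length `n`: distinct facts `f 0, …, f (n-1)` with positions
`p i ≠ p' i` such that the constant of `f i` at position `p' i` equals the constant of
`f (i+1 mod n)` at position `p (i+1 mod n)`. -/
def HasCycleOfLength (I : Inst) (n : ℕ) : Prop :=
  0 < n ∧
  ∃ (f : ℕ → Fact) (p p' : ℕ → ℕ),
    (∀ i < n, f i ∈ I) ∧
    (∀ i j, i < n → j < n → f i = f j → i = j) ∧
    (∀ i < n, p i ≠ p' i ∧ p i < (f i).args.length ∧ p' i < (f i).args.length) ∧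
    (∀ i < n, (f i).args.getD (p' i) 0 = (f ((i + 1) % n)).args.getD (p ((i + 1) % n)) 0)

/-- The girth of `I` exceeds `g` (in particular this holds if `I` has no cycle at all). -/
def GirthGT (I : Inst) (g : ℕ) : Prop :=
  ∀ n ≤ g, ¬ HasCycleOfLength I n

/-! ### Tree decompositions -/

/-- `I` has a tree decomposition with bags of size at most `k`, overlap of distinct bags of
size at most `ℓ`, and such that every bag contains all elements of `params`. -/
def HasTreeDecompWithParams (I : Inst) (params : Finset Const) (ℓ k : ℕ) : Prop :=
  ∃ (V : Type) (T : SimpleGraph V) (B : V → Finset Const),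
    T.IsTree ∧
    (∀ v, B v ⊆ adom I ∪ params) ∧
    (∀ a ∈ adom I, (T.induce {v | a ∈ B v}).Connected) ∧
    (∀ f ∈ I, ∃ v, ∀ c ∈ f.args, c ∈ B v) ∧
    (∀ v, params ⊆ B v) ∧
    (∀ v w, v ≠ w → (B v ∩ B w).card ≤ ℓ) ∧
    (∀ v, (B v).card ≤ k)

/-- `I` has treewidth `(ℓ,k)`: it admits an `(ℓ,k)`-tree decomposition. -/
def HasTreeDecomp (I : Inst) (ℓ k : ℕ) : Prop :=
  HasTreeDecompWithParams I ∅ ℓ k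

/-! ### Terms, atoms, rules, programs -/

/-- A term is a variable or a constant. -/
inductive Term where
  | var : Var → Term
  | const : Const → Term
deriving DecidableEq

def Term.eval (v : Var → Const) : Term → Const
  | .var x => v x
  | .const c => c

def Term.varSet : Term → Finset Var
  | .var x => {x}
  | .const _ => ∅

/-- An atom: a relation symbol applied to a tuple of terms. -/
structure Atom where
  rel : RelSym
  args : List Term
deriving DecidableEq

/-- Apply a valuation to an atom, obtaining a fact. -/
def Atom.app (a : Atom) (v : Var → Const) : Fact :=
  ⟨a.rel, a.args.map (Term.eval v)⟩

def Atom.vars (a : Atom) : Finset Var :=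
  a.args.foldr (fun t s => t.varSet ∪ s) ∅

/-- The atom mentions no constants. -/
def Atom.constFree (a : Atom) : Prop :=
  ∀ t ∈ a.args, ∃ x, t = Term.var x

def Atom.size (a : Atom) : ℕ := 1 + a.args.length

/-- The number of variable occurrences in an atom. -/
def Atom.varOccs (a : Atom) : ℕ :=
  (a.args.filter (fun t => match t with | Term.var _ => true | Term.const _ => false)).length

/-- A (disjunctive) rule: a disjunction of head atoms and a conjunction of body atoms. -/
structure Rule where
  head : List Atom
  body : List Atom
deriving DecidableEq

def Rule.atoms (ρ : Rule) : List Atom := ρ.head ++ ρ.body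

def Rule.vars (ρ : Rule) : Finset Var :=
  ρ.atoms.foldr (fun a s => a.vars ∪ s) ∅

def Rule.bodyVars (ρ : Rule) : Finset Var :=
  ρ.body.foldr (fun a s => a.vars ∪ s) ∅

/-- The rule holds in a set of facts `J` (all variables universally quantified). -/
def Rule.holdsIn (ρ : Rule) (J : Set Fact) : Prop :=
  ∀ v : Var → Const, (∀ a ∈ ρ.body, a.app v ∈ J) → ∃ a ∈ ρ.head, a.app v ∈ J

def Rule.size (ρ : Rule) : ℕ := 1 + (ρ.atoms.map Atom.size).sum

def Rule.bodyVarOccs (ρ : Rule) : ℕ := (ρ.body.map Atom.varOccs).sum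

/-- A disjunctive Datalog program: a finite set of rules together with a selected goal
relation and its arity. -/
structure Program where
  rules : Finset Rule
  goal : RelSym
  goalArity : ℕ

/-- `P.models I t` formalizes `P ∪ I ⊨ goal(t)` (first-order entailment; by Herbrand's
theorem for universal sentences it suffices to quantify over all sets of facts). -/
def Program.models (P : Program) (I : Inst) (t : List Const) : Prop :=
  ∀ J : Set Fact, (I : Set Fact) ⊆ J → (∀ ρ ∈ P.rules, ρ.holdsIn J) →
    (⟨P.goal, t⟩ : Fact) ∈ J

/-- The IDB relations of a program: the relations occurring in some rule head, together
with the goal relation. -/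
def Program.IDB (P : Program) : Finset RelSym :=
  insert P.goal (P.rules.biUnion (fun ρ => (ρ.head.map Atom.rel).toFinset))

/-- `P` is a well-formed disjunctive Datalog program over EDB schema `S`. -/
def Program.IsDDLog (P : Program) (S : Schema) : Prop :=
  (∀ r ∈ P.IDB, r ∉ S.rels) ∧
  ∀ ρ ∈ P.rules,
    ρ.body ≠ [] ∧
    (∀ a ∈ ρ.head, a.vars ⊆ ρ.bodyVars) ∧
    (∀ a ∈ ρ.body, a.rel ≠ P.goal) ∧
    ((∃ a ∈ ρ.head, a.rel = P.goal) → ρ.head.length = 1) ∧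
    (∀ a ∈ ρ.atoms, a.rel = P.goal → a.args.length = P.goalArity) ∧
    (∀ a ∈ ρ.atoms, a.rel ∉ P.IDB → a.rel ∈ S.rels ∧ a.args.length = S.arity a.rel)

/-- Monadic disjunctive Datalog: all IDB relations except possibly goal have arity ≤ 1. -/
def Program.IsMDDLog (P : Program) (S : Schema) : Prop :=
  P.IsDDLog S ∧
  ∀ ρ ∈ P.rules, ∀ a ∈ ρ.atoms, a.rel ∈ P.IDB → a.rel ≠ P.goal → a.args.length ≤ 1

/-- Datalog: every rule head consists of exactly one atom. -/
def Program.IsDatalog (P : Program) (S : Schema) : Prop :=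
  P.IsDDLog S ∧ ∀ ρ ∈ P.rules, ρ.head.length = 1

/-- Monadic Datalog. -/
def Program.IsMDLog (P : Program) (S : Schema) : Prop :=
  P.IsDatalog S ∧
  ∀ ρ ∈ P.rules, ∀ a ∈ ρ.atoms, a.rel ∈ P.IDB → a.rel ≠ P.goal → a.args.length ≤ 1

/-- The program mentions no constants. -/
def Program.constFree (P : Program) : Prop :=
  ∀ ρ ∈ P.rules, ∀ a ∈ ρ.atoms, a.constFree

/-- The size of a program (number of symbols needed to write it). -/
def Program.size (P : Program) : ℕ := ∑ ρ ∈ P.rules, ρ.size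

/-- The diameter: the maximum number of variables occurring in a rule. -/
def Program.diameter (P : Program) : ℕ := P.rules.sup (fun ρ => ρ.vars.card)

/-- The rule size: the maximum number of variable occurrences in a rule body. -/
def Program.ruleSize (P : Program) : ℕ := P.rules.sup Rule.bodyVarOccs

def Atom.widthContrib (P : Program) (a : Atom) : ℕ :=
  if a.rel ∈ P.IDB ∧ a.rel ≠ P.goal then a.args.length else 0

/-- The width: the maximum arity of non-goal IDB relations used in the program. -/
def Program.width (P : Program) : ℕ :=
  P.rules.sup (fun ρ => (ρ.atoms.map (Atom.widthContrib P)).foldr max 0)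

/-- A simple MDDLog program: each rule has at most one EDB atom, which contains all
variables of the rule body, each exactly once; rules without an EDB atom have at most
one variable. -/
def Program.IsSimple (P : Program) : Prop :=
  ∀ ρ ∈ P.rules,
    (∀ a ∈ ρ.body, ∀ b ∈ ρ.body, a.rel ∉ P.IDB → b.rel ∉ P.IDB → a = b) ∧
    (∀ a ∈ ρ.body, a.rel ∉ P.IDB →
      ∃ xs : List Var, a.args = xs.map Term.var ∧ xs.Nodup ∧ xs.toFinset = ρ.bodyVars) ∧
    ((∀ a ∈ ρ.body, a.rel ∈ P.IDB) → ρ.bodyVars.card ≤ 1)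

/-! ### Datalog with parameters -/

/-- An `(ℓ,k)`-Datalog program with `n` parameters: an `n`-ary `(ℓ+n,k+n)`-Datalog program
in which all IDB relations have arity at least `n` and in every rule all IDB atoms
(including goal atoms) agree on the terms in their last `n` positions. -/
def Program.IsParamDatalog (Γ : Program) (S : Schema) (ℓ k n : ℕ) : Prop :=
  Γ.IsDatalog S ∧ Γ.goalArity = n ∧
  Γ.width ≤ ℓ + n ∧ Γ.diameter ≤ k + n ∧
  (∀ ρ ∈ Γ.rules, ∀ a ∈ ρ.atoms, a.rel ∈ Γ.IDB → n ≤ a.args.length) ∧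
  (∀ ρ ∈ Γ.rules, ∃ ys : List Term,
    ∀ a ∈ ρ.atoms, a.rel ∈ Γ.IDB → a.args.drop (a.args.length - n) = ys)

/-! ### Conjunctive queries and unions of conjunctive queries -/

/-- A conjunctive query: answer variables, relational atoms, and equality atoms. -/
structure CQ where
  answers : List Var
  atoms : List Atom
  eqs : List (Var × Var)

/-- The CQ only uses relations from schema `S` (with correct arities) and no constants. -/
def CQ.over (q : CQ) (S : Schema) : Prop :=
  ∀ a ∈ q.atoms, a.rel ∈ S.rels ∧ a.args.length = S.arity a.rel ∧ a.constFree

/-- `t` is an answer to the CQ `q` on `I`. -/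
def CQ.holds (q : CQ) (I : Inst) (t : List Const) : Prop :=
  ∃ h : Var → Const,
    (∀ a ∈ q.atoms, a.app h ∈ I) ∧
    (∀ e ∈ q.eqs, h e.1 = h e.2) ∧
    q.answers.map h = t

/-- A union of conjunctive queries is a finite list of CQs. -/
abbrev UCQ := List CQ

def UCQHolds (u : UCQ) (I : Inst) (t : List Const) : Prop :=
  ∃ q ∈ u, q.holds I t

def UCQOver (u : UCQ) (S : Schema) (n : ℕ) : Prop :=
  ∀ q ∈ u, q.over S ∧ q.answers.length = n

def Term.toConst : Term → Const
  | .var x => x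
  | .const c => c

/-- A CQ viewed as an instance (variables as constants). -/
def CQ.toInst (q : CQ) : Inst :=
  (q.atoms.map (fun a => (⟨a.rel, a.args.map Term.toConst⟩ : Fact))).toFinset

/-! ### First-order queries -/

/-- First-order formulas over a relational vocabulary, possibly with equality,
without constants and function symbols. -/
inductive FO where
  | rel : RelSym → List Var → FO
  | eq : Var → Var → FO
  | neg : FO → FO
  | conj : FO → FO → FO
  | disj : FO → FO → FO
  | ex : Var → FO → FO
  | all : Var → FO → FO

/-- Evaluation of a first-order formula in an instance (active-domain quantification). -/
def FO.eval (I : Inst) : FO → (Var → Const) → Prop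
  | .rel r xs, v => (⟨r, xs.map v⟩ : Fact) ∈ I
  | .eq x y, v => v x = v y
  | .neg φ, v => ¬ FO.eval I φ v
  | .conj φ ψ, v => FO.eval I φ v ∧ FO.eval I ψ v
  | .disj φ ψ, v => FO.eval I φ v ∨ FO.eval I ψ v
  | .ex x φ, v => ∃ c ∈ adom I, FO.eval I φ (Function.update v x c)
  | .all x φ, v => ∀ c ∈ adom I, FO.eval I φ (Function.update v x c)

/-- The formula only uses relation symbols from `S`, with correct arities. -/
def FO.over (S : Schema) : FO → Prop
  | .rel r xs => r ∈ S.rels ∧ xs.length = S.arity r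
  | .eq _ _ => True
  | .neg φ => FO.over S φ
  | .conj φ ψ => FO.over S φ ∧ FO.over S ψ
  | .disj φ ψ => FO.over S φ ∧ FO.over S ψ
  | .ex _ φ => FO.over S φ
  | .all _ φ => FO.over S φ

/-- Free variables of a first-order formula. -/
def FO.free : FO → Finset Var
  | .rel _ xs => xs.toFinset
  | .eq x y => {x, y}
  | .neg φ => φ.free
  | .conj φ ψ => φ.free ∪ ψ.free
  | .disj φ ψ => φ.free ∪ ψ.free
  | .ex x φ => φ.free.erase x
  | .all x φ => φ.free.erase x

/-! ### Rewritings -/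

/-- `φ` is an FO-rewriting of the (n-ary) program `P` over `S`
(answer variables are `0, …, n-1`). -/
def FOIsRewritingOf (φ : FO) (S : Schema) (P : Program) : Prop :=
  FO.over S φ ∧ φ.free ⊆ Finset.range P.goalArity ∧
  ∀ I : Inst, S.IsInstance I → ∀ t : List Const, t.length = P.goalArity →
    (∀ c ∈ t, c ∈ adom I) → (FO.eval I φ (fun i => t.getD i 0) ↔ P.models I t)

/-- `u` is a UCQ-rewriting of the program `P` over `S`. -/
def UCQIsRewritingOf (u : UCQ) (S : Schema) (P : Program) : Prop :=
  UCQOver u S P.goalArity ∧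
  ∀ I : Inst, S.IsInstance I → ∀ t : List Const, t.length = P.goalArity →
    (∀ c ∈ t, c ∈ adom I) → (UCQHolds u I t ↔ P.models I t)

/-- The program `Γ` is a rewriting of the program `P` over `S`. -/
def Program.IsRewritingOf (Γ : Program) (S : Schema) (P : Program) : Prop :=
  Γ.goalArity = P.goalArity ∧
  ∀ I : Inst, S.IsInstance I → ∀ t : List Const, t.length = P.goalArity →
    (∀ c ∈ t, c ∈ adom I) → (Γ.models I t ↔ P.models I t)

/-- The program `Γ` is sound for the program `P` over `S`. -/
def Program.SoundFor (Γ : Program) (S : Schema) (P : Program) : Prop :=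
  ∀ I : Inst, S.IsInstance I → ∀ t : List Const, t.length = P.goalArity →
    (∀ c ∈ t, c ∈ adom I) → Γ.models I t → P.models I t

/-! ### Boolean queries, CSPs -/

/-- The complement of the generalized CSP given by the set of templates `S`, as a
Boolean query: true on `I` iff `I` maps homomorphically to no template in `S`. -/
def coCSP (S : Finset Inst) : Inst → Prop := fun I => ∀ T ∈ S, ¬ HomTo I T

/-- `φ` is an FO-definition (rewriting) of the Boolean query `Q` over `S`. -/
def IsFODefOf (φ : FO) (S : Schema) (Q : Inst → Prop) : Prop :=
  FO.over S φ ∧ φ.free = ∅ ∧ ∀ I : Inst, S.IsInstance I → (FO.eval I φ (fun _ => 0) ↔ Q I)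

/-- `u` is a UCQ-definition (rewriting) of the Boolean query `Q` over `S`. -/
def IsUCQDefOf (u : UCQ) (S : Schema) (Q : Inst → Prop) : Prop :=
  UCQOver u S 0 ∧ ∀ I : Inst, S.IsInstance I → (UCQHolds u I [] ↔ Q I)

/-- `Γ` is an MDLog-definition (rewriting) of the Boolean query `Q` over `S`. -/
def IsMDLogDefOf (Γ : Program) (S : Schema) (Q : Inst → Prop) : Prop :=
  Γ.IsMDLog S ∧ Γ.constFree ∧ Γ.goalArity = 0 ∧
  ∀ I : Inst, S.IsInstance I → (Γ.models I [] ↔ Q I)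

/-- `Γ` is a Datalog-definition (rewriting) of the Boolean query `Q` over `S`. -/
def IsDLogDefOf (Γ : Program) (S : Schema) (Q : Inst → Prop) : Prop :=
  Γ.IsDatalog S ∧ Γ.constFree ∧ Γ.goalArity = 0 ∧
  ∀ I : Inst, S.IsInstance I → (Γ.models I [] ↔ Q I)

/-! ### Aggregation schemas -/

/-- A `k`-aggregation schema for `SE`: every relation `R` is of the form `R_{q(x̄)}` for a
quantifier-free CQ `q(x̄)` over `SE` with at most `k` answer variables, the arity of `R`
being the number of answer variables of `q(x̄)`. -/
structure Aggregation (SE : Schema) (k : ℕ) where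
  S : Schema
  q : RelSym → CQ
  wf : ∀ R ∈ S.rels,
    (q R).over SE ∧
    (q R).eqs = [] ∧
    (q R).answers.Nodup ∧
    (q R).answers.length = S.arity R ∧
    (q R).answers.length ≤ k ∧
    (∀ a ∈ (q R).atoms, a.vars ⊆ (q R).answers.toFinset)

/-- `I'` is the `S'`-instance corresponding to the `SE`-instance `I`: it consists of all
facts `R_{q(x̄)}(ā)` with `I ⊨ q(ā)`. -/
def CorrUp {SE : Schema} {k : ℕ} (A : Aggregation SE k) (I I' : Inst) : Prop :=
  ∀ f : Fact, f ∈ I' ↔ (f.rel ∈ A.S.rels ∧ (A.q f.rel).holds I f.args)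

/-- `I` is the `SE`-instance corresponding to the `S'`-instance `I'`: it consists of all
facts that occur as a conjunct of `q(ā)` for some fact `R_{q(x̄)}(ā) ∈ I'`. -/
def CorrDown {SE : Schema} {k : ℕ} (A : Aggregation SE k) (I' I : Inst) : Prop :=
  ∀ g : Fact, g ∈ I ↔
    ∃ f ∈ I', ∃ h : Var → Const,
      (A.q f.rel).answers.map h = f.args ∧ ∃ a ∈ (A.q f.rel).atoms, Atom.app a h = g

/-! ### Equality -/

/-- The distinguished binary relation symbol `eq`. -/
def eqRel : RelSym := 0

/-- The schema contains the distinguished binary relation `eq`. -/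
def HasEqualitySchema (S : Schema) : Prop := eqRel ∈ S.rels ∧ S.arity eqRel = 2

/-- A template has equality: it interprets `eq` as `{(a,a) | a ∈ adom T}`. -/
def TemplateHasEquality (T : Inst) : Prop :=
  ∀ a b : Const, ((⟨eqRel, [a, b]⟩ : Fact) ∈ T ↔ (a = b ∧ a ∈ adom T))

def eqRuleFwd (R : RelSym) : Rule :=
  ⟨[⟨R, [Term.var 1]⟩], [⟨R, [Term.var 0]⟩, ⟨eqRel, [Term.var 0, Term.var 1]⟩]⟩

def eqRuleBwd (R : RelSym) : Rule :=
  ⟨[⟨R, [Term.var 0]⟩], [⟨R, [Term.var 1]⟩, ⟨eqRel, [Term.var 0, Term.var 1]⟩]⟩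

/-- The extension `P^=` of `P` with the fresh EDB relation `eq` and the rules
`P(x) ∧ eq(x,y) → P(y)` and `P(y) ∧ eq(x,y) → P(x)` for each IDB relation `P`. -/
def Program.withEq (P : Program) : Program :=
  ⟨P.rules ∪ (P.IDB.erase P.goal).biUnion (fun R => {eqRuleFwd R, eqRuleBwd R}),
   P.goal, P.goalArity⟩

/-! ### (1,k)-decompositions and decomposition girth -/

def partInst (I : Inst) (part : Fact → ℕ) (v : ℕ) : Inst :=
  I.filter (fun f => part f = v)

/-- `part` induces a `(1,k)`-decomposition of `I`: parts have active domains of size at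
most `k`, distinct parts overlap in at most one constant. -/
def IsDecompOf (I : Inst) (part : Fact → ℕ) (k : ℕ) : Prop :=
  (∀ v ∈ I.image part, (adom (partInst I part v)).card ≤ k) ∧
  (∀ v w, v ∈ I.image part → w ∈ I.image part → v ≠ w →
    ((adom (partInst I part v)) ∩ (adom (partInst I part w))).card ≤ 1)

/-- The instance over an aggregation schema induced by a decomposition: one fact per part,
whose arguments enumerate the active domain of the part (in a fixed order). -/
def decompInst (I : Inst) (part : Fact → ℕ) : Inst :=
  (I.image part).image
    (fun v => (⟨v, (adom (partInst I part v)).sort (· ≤ ·)⟩ : Fact))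

/-- The `(1,k)`-decomposition girth of `I` exceeds `g`: some `(1,k)`-decomposition `D` of
`I` is such that the girth of `I_D` exceeds `g`. -/
def DecompGirthGT (I : Inst) (k g : ℕ) : Prop :=
  ∃ part : Fact → ℕ, IsDecompOf I part k ∧ GirthGT (decompInst I part) g

/-! ### MMSNP -/

/-- An atom `X_i(x_j)` built from a monadic second-order variable. -/
structure SOAtom where
  pred : ℕ
  var : Var
deriving DecidableEq

/-- An implication `β₁ ∨ ⋯ ∨ βₙ ← α₁ ∧ ⋯ ∧ αₘ` of an MMSNP formula: the `β`s are
second-order atoms, the `α`s are second-order atoms or EDB atoms. -/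
structure MMSNPImpl where
  headDisjuncts : List SOAtom
  bodySO : List SOAtom
  bodyEDB : List Fact
deriving DecidableEq

/-- An MMSNP formula `∃X₁⋯∃Xp ∀x₁⋯∀xm φ` with `freeVarCount` free first-order variables
(the variables `0, …, freeVarCount - 1`). -/
structure MMSNP where
  freeVarCount : ℕ
  impls : List MMSNPImpl

def MMSNPOver (θ : MMSNP) (S : Schema) : Prop :=
  ∀ c ∈ θ.impls, ∀ f ∈ c.bodyEDB, f.rel ∈ S.rels ∧ f.args.length = S.arity f.rel

def MMSNPImpl.vars (c : MMSNPImpl) : Finset Var :=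
  (c.headDisjuncts.map SOAtom.var).toFinset ∪ (c.bodySO.map SOAtom.var).toFinset ∪
    c.bodyEDB.foldr (fun f s => f.args.toFinset ∪ s) ∅

/-- The diameter of an MMSNP formula: the maximum number of variables in an implication. -/
def MMSNP.diameter (θ : MMSNP) : ℕ :=
  (θ.impls.map (fun c => c.vars.card)).foldr max 0

/-- `I ⊨ θ[t]`: satisfaction of an MMSNP formula in an instance, with the free variables
`0, …, freeVarCount-1` interpreted by the tuple `t`. -/
def MMSNPSat (θ : MMSNP) (I : Inst) (t : List Const) : Prop :=
  ∃ X : ℕ → Set Const,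
    ∀ v : Var → Const, (∀ x, v x ∈ adom I) → (∀ i < θ.freeVarCount, v i = t.getD i 0) →
      ∀ c ∈ θ.impls,
        ((∀ a ∈ c.bodySO, v a.var ∈ X a.pred) ∧
         (∀ f ∈ c.bodyEDB, (⟨f.rel, f.args.map v⟩ : Fact) ∈ I)) →
        ∃ a ∈ c.headDisjuncts, v a.var ∈ X a.pred

end DDLogPaper

open DDLogPaper


namespace S10

/-! #### Encodings -/

/-- Chain length parameter. -/
def Lp (g : ℕ) : ℕ := g + 2

lemma Lp_pos (g : ℕ) : 0 < Lp g := by unfold Lp; omega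

/-- Encoding of a fact as a natural number. -/
def encF (F : Fact) : ℕ := Nat.pair F.rel (Encodable.encode F.args)

lemma encF_inj {F F' : Fact} (h : encF F = encF F') : F = F' := by
  unfold encF at h
  rw [Nat.pair_eq_pair] at h
  cases F; cases F'
  simp only [Fact.mk.injEq]
  exact ⟨h.1, Encodable.encode_injective h.2⟩

/-- Fresh constant for the occurrence `(F, i)`. -/
def cOcc (F : Fact) (i : ℕ) : ℕ := 2 * Nat.pair (encF F) i

/-- Fresh interior constant for position `t` on the chain of `a`. -/
def cInt (a t : ℕ) : ℕ := 2 * Nat.pair a t + 1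

lemma cOcc_inj {F F' : Fact} {i i' : ℕ} (h : cOcc F i = cOcc F' i') : F = F' ∧ i = i' := by
  unfold cOcc at h
  have h2 : Nat.pair (encF F) i = Nat.pair (encF F') i' := by omega
  rw [Nat.pair_eq_pair] at h2
  exact ⟨encF_inj h2.1, h2.2⟩

lemma cInt_inj {a t a' t' : ℕ} (h : cInt a t = cInt a' t') : a = a' ∧ t = t' := by
  unfold cInt at h
  have h2 : Nat.pair a t = Nat.pair a' t' := by omega
  rwa [Nat.pair_eq_pair] at h2

lemma cOcc_ne_cInt (F : Fact) (i a t : ℕ) : cOcc F i ≠ cInt a t := by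
  unfold cOcc cInt; omega

/-! #### Occurrence lists and chain nodes -/

/-- The list of occurrences of the constant `a` in the instance `I`. -/
noncomputable def occs (I : Inst) (a : ℕ) : List (Fact × ℕ) :=
  (I.toList.flatMap (fun F => (List.range F.args.length).filterMap
    (fun i => if F.args.getD i 0 = a then some (F, i) else none))).dedup

lemma mem_occs {I : Inst} {a : ℕ} {F : Fact} {i : ℕ} :
    (F, i) ∈ occs I a ↔ F ∈ I ∧ i < F.args.length ∧ F.args.getD i 0 = a := by
  unfold occs
  rw [List.mem_dedup, List.mem_flatMap]
  constructor
  · rintro ⟨G, hG, hmem⟩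
    rw [List.mem_filterMap] at hmem
    obtain ⟨j, hj, hjeq⟩ := hmem
    rw [List.mem_range] at hj
    by_cases hc : G.args.getD j 0 = a
    · rw [if_pos hc] at hjeq
      obtain ⟨h1, h2⟩ := Prod.mk.injEq .. ▸ (Option.some.inj hjeq)
      subst h1; subst h2
      exact ⟨Finset.mem_toList.1 hG, hj, hc⟩
    · rw [if_neg hc] at hjeq; exact absurd hjeq (by simp)
  · rintro ⟨hF, hi, ha⟩
    refine ⟨F, Finset.mem_toList.2 hF, ?_⟩
    rw [List.mem_filterMap]
    exact ⟨i, List.mem_range.2 hi, by rw [if_pos ha]⟩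

lemma occs_nodup (I : Inst) (a : ℕ) : (occs I a).Nodup := List.nodup_dedup _

lemma mem_adom_iff {I : Inst} {a : ℕ} : a ∈ adom I ↔ ∃ F ∈ I, a ∈ F.args := by
  unfold adom
  simp [Finset.mem_biUnion, List.mem_toFinset]

lemma exists_occ_of_adom {I : Inst} {a : ℕ} (ha : a ∈ adom I) :
    ∃ F i, (F, i) ∈ occs I a := by
  obtain ⟨F, hF, haF⟩ := mem_adom_iff.1 ha
  obtain ⟨i, hi, hget⟩ := List.mem_iff_getElem.1 haF
  exact ⟨F, i, mem_occs.2 ⟨hF, hi, by rw [List.getD_eq_getElem _ _ hi]; exact hget⟩⟩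

lemma occs_len_pos {I : Inst} {a : ℕ} (ha : a ∈ adom I) : 0 < (occs I a).length := by
  obtain ⟨F, i, h⟩ := exists_occ_of_adom ha
  exact List.length_pos_iff.2 (List.ne_nil_of_mem h)

def junk : Fact × ℕ := (⟨0, []⟩, 0)

/-- The `s`-th node on the chain of the constant `a`. -/
noncomputable def node (I : Inst) (g : ℕ) (a s : ℕ) : ℕ :=
  if s % Lp g = 0 then
    cOcc ((occs I a).getD (s / Lp g) junk).1 ((occs I a).getD (s / Lp g) junk).2
  else cInt a s

/-- Validity of the index `s` for the chain of `a`. -/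
def Good (I : Inst) (g : ℕ) (a s : ℕ) : Prop :=
  s % Lp g = 0 → s / Lp g < (occs I a).length

/-- Length bound for the chain of `a`. -/
noncomputable def bnd (I : Inst) (g : ℕ) (a : ℕ) : ℕ := ((occs I a).length - 1) * Lp g

lemma good_of_le_bnd {I : Inst} {g a s : ℕ} (ha : a ∈ adom I) (hs : s ≤ bnd I g a) :
    Good I g a s := by
  intro h0
  have hlen := occs_len_pos ha
  have h1 : s / Lp g ≤ bnd I g a / Lp g := Nat.div_le_div_right hs
  rw [bnd, Nat.mul_div_cancel _ (Lp_pos g)] at h1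
  omega

lemma node_inj {I : Inst} {g a s a' s' : ℕ} (hg : Good I g a s) (hg' : Good I g a' s')
    (h : node I g a s = node I g a' s') : a = a' ∧ s = s' := by
  unfold node at h
  by_cases h1 : s % Lp g = 0 <;> by_cases h2 : s' % Lp g = 0
  · rw [if_pos h1, if_pos h2] at h
    have hlt := hg h1
    have hlt' := hg' h2
    have hxa : (occs I a).getD (s / Lp g) junk ∈ occs I a := by
      rw [List.getD_eq_getElem _ _ hlt]; exact List.getElem_mem hlt
    have hxa' : (occs I a').getD (s' / Lp g) junk ∈ occs I a' := by
      rw [List.getD_eq_getElem _ _ hlt']; exact List.getElem_mem hlt'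
    cases hx : (occs I a).getD (s / Lp g) junk with
    | mk F i =>
      cases hy : (occs I a').getD (s' / Lp g) junk with
      | mk F' i' =>
        rw [hx] at h hxa
        rw [hy] at h hxa'
        obtain ⟨hFF, hii⟩ := cOcc_inj h
        subst hFF; subst hii
        have h1a : F.args.getD i 0 = a := (mem_occs.1 hxa).2.2
        have h1a' : F.args.getD i 0 = a' := (mem_occs.1 hxa').2.2
        have haa : a = a' := by rw [← h1a, ← h1a']
        subst haa
        have hocc : (occs I a).getD (s / Lp g) junk = (occs I a).getD (s' / Lp g) junk := by
          rw [hx, hy]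
        rw [List.getD_eq_getElem _ _ hlt, List.getD_eq_getElem _ _ hlt'] at hocc
        have hj : s / Lp g = s' / Lp g := ((occs_nodup I a).getElem_inj_iff).1 hocc
        have hds : s = Lp g * (s / Lp g) :=
          (Nat.mul_div_cancel' (Nat.dvd_of_mod_eq_zero h1) : _ = s).symm
        have hds' : s' = Lp g * (s' / Lp g) :=
          (Nat.mul_div_cancel' (Nat.dvd_of_mod_eq_zero h2) : _ = s').symm
        exact ⟨rfl, by rw [hds, hds', hj]⟩
  · rw [if_pos h1, if_neg h2] at h; exact absurd h (cOcc_ne_cInt _ _ _ _)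
  · rw [if_neg h1, if_pos h2] at h; exact absurd h.symm (cOcc_ne_cInt _ _ _ _)
  · rw [if_neg h1, if_neg h2] at h
    exact cInt_inj h

/-! #### The high-girth instance -/

/-- Copy fact. -/
def CF (F : Fact) : Fact := ⟨F.rel, (List.range F.args.length).map (cOcc F)⟩

/-- Equality (chain) fact. -/
noncomputable def EF (I : Inst) (g : ℕ) (a t : ℕ) : Fact :=
  ⟨eqRel, [node I g a t, node I g a (t + 1)]⟩

/-- The instance of girth `> g` homomorphically equivalent to `I`
w.r.t. templates with equality. -/
noncomputable def IG (I : Inst) (g : ℕ) : Inst :=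
  I.image CF ∪ (adom I).biUnion (fun a => (Finset.range (bnd I g a)).image (EF I g a))

lemma mem_IG {I : Inst} {g : ℕ} {f : Fact} :
    f ∈ IG I g ↔ (∃ F ∈ I, f = CF F) ∨ ∃ a ∈ adom I, ∃ t < bnd I g a, f = EF I g a t := by
  unfold IG
  simp only [Finset.mem_union, Finset.mem_image, Finset.mem_biUnion, Finset.mem_range]
  constructor
  · rintro (⟨F, hF, rfl⟩ | ⟨a, ha, t, ht, rfl⟩)
    · exact Or.inl ⟨F, hF, rfl⟩
    · exact Or.inr ⟨a, ha, t, ht, rfl⟩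
  · rintro (⟨F, hF, rfl⟩ | ⟨a, ha, t, ht, rfl⟩)
    · exact Or.inl ⟨F, hF, rfl⟩
    · exact Or.inr ⟨a, ha, t, ht, rfl⟩

lemma mem_CF_args {F : Fact} {x : ℕ} :
    x ∈ (CF F).args ↔ ∃ i < F.args.length, x = cOcc F i := by
  unfold CF
  simp only [List.mem_map, List.mem_range]
  constructor
  · rintro ⟨i, hi, rfl⟩; exact ⟨i, hi, rfl⟩
  · rintro ⟨i, hi, rfl⟩; exact ⟨i, hi, rfl⟩

lemma mem_EF_args {I : Inst} {g a t x : ℕ} :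
    x ∈ (EF I g a t).args ↔ x = node I g a t ∨ x = node I g a (t + 1) := by
  unfold EF
  simp [List.mem_cons]

lemma mem_EF_node {I : Inst} {g a t x : ℕ} (ha : a ∈ adom I) (ht : t < bnd I g a)
    (hx : x ∈ (EF I g a t).args) :
    ∃ s, (s = t ∨ s = t + 1) ∧ x = node I g a s ∧ Good I g a s := by
  rcases mem_EF_args.1 hx with h | h
  · exact ⟨t, Or.inl rfl, h, good_of_le_bnd ha (by omega)⟩
  · exact ⟨t + 1, Or.inr rfl, h, good_of_le_bnd ha (by omega)⟩

lemma isInstance_IG {SE : Schema} (heq : HasEqualitySchema SE) {I : Inst}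
    (hI : SE.IsInstance I) (g : ℕ) : SE.IsInstance (IG I g) := by
  intro f hf
  rcases mem_IG.1 hf with ⟨F, hF, rfl⟩ | ⟨a, _, t, _, rfl⟩
  · obtain ⟨h1, h2⟩ := hI F hF
    exact ⟨h1, by simpa [CF] using h2⟩
  · exact ⟨heq.1, by simp [EF, heq.2]⟩

/-! #### Homomorphic equivalence -/

/-- Decoding a constant of `IG I g` back to the original constant. -/
noncomputable def origC (x : ℕ) : ℕ :=
  if x % 2 = 0 then
    match Encodable.decode (α := List ℕ) (Nat.unpair (Nat.unpair (x / 2)).1).2 with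
    | some l => l.getD (Nat.unpair (x / 2)).2 0
    | none => 0
  else (Nat.unpair ((x - 1) / 2)).1

lemma origC_cOcc (F : Fact) (i : ℕ) : origC (cOcc F i) = F.args.getD i 0 := by
  unfold origC cOcc
  have h2 : 2 * Nat.pair (encF F) i % 2 = 0 := by omega
  have h3 : 2 * Nat.pair (encF F) i / 2 = Nat.pair (encF F) i := by omega
  rw [if_pos h2, h3, Nat.unpair_pair]
  unfold encF
  rw [Nat.unpair_pair]
  simp [Encodable.encodek]

lemma origC_cInt (a t : ℕ) : origC (cInt a t) = a := by
  unfold origC cInt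
  have h2 : ¬ (2 * Nat.pair a t + 1) % 2 = 0 := by omega
  have h3 : (2 * Nat.pair a t + 1 - 1) / 2 = Nat.pair a t := by omega
  rw [if_neg h2, h3, Nat.unpair_pair]

lemma origC_node {I : Inst} {g a s : ℕ} (hg : Good I g a s) : origC (node I g a s) = a := by
  unfold node
  by_cases h1 : s % Lp g = 0
  · rw [if_pos h1]
    have hlt := hg h1
    have hxa : (occs I a).getD (s / Lp g) junk ∈ occs I a := by
      rw [List.getD_eq_getElem _ _ hlt]; exact List.getElem_mem hlt
    cases hx : (occs I a).getD (s / Lp g) junk with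
    | mk F i =>
      rw [hx] at hxa
      rw [origC_cOcc]
      exact (mem_occs.1 hxa).2.2
  · rw [if_neg h1, origC_cInt]

lemma map_range_getD (F : Fact) (φ : ℕ → ℕ) :
    (List.range F.args.length).map (fun i => φ (F.args.getD i 0)) = F.args.map φ := by
  apply List.ext_getElem
  · simp
  · intro i h1 h2
    simp only [List.getElem_map, List.getElem_range]
    rw [List.getD_eq_getElem]

lemma adomT_of_hom {I T : Inst} {h0 : Const → Const} (hh : IsHom h0 I T) {a : ℕ}
    (ha : a ∈ adom I) : h0 a ∈ adom T := by
  obtain ⟨F, hF, haF⟩ := mem_adom_iff.1 ha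
  have := hh F hF
  refine Finset.mem_biUnion.2 ⟨⟨F.rel, F.args.map h0⟩, this, ?_⟩
  rw [List.mem_toFinset]
  exact List.mem_map.2 ⟨a, haF, rfl⟩

/-- Forward direction: a homomorphism `I → T` yields one `IG I g → T`. -/
lemma hom_fwd {I T : Inst} (g : ℕ) (hTeq : TemplateHasEquality T) (h : HomTo I T) :
    HomTo (IG I g) T := by
  obtain ⟨h0, hh⟩ := h
  refine ⟨h0 ∘ origC, ?_⟩
  intro f hf
  rcases mem_IG.1 hf with ⟨F, hF, rfl⟩ | ⟨a, ha, t, ht, rfl⟩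
  · have hmap : (CF F).args.map (h0 ∘ origC) = F.args.map h0 := by
      unfold CF
      rw [List.map_map]
      have : (h0 ∘ origC) ∘ cOcc F = fun i => h0 (F.args.getD i 0) := by
        funext i
        simp [Function.comp, origC_cOcc]
      rw [this, map_range_getD]
    show (⟨(CF F).rel, (CF F).args.map (h0 ∘ origC)⟩ : Fact) ∈ T
    rw [hmap]
    have : (CF F).rel = F.rel := rfl
    rw [this]
    exact hh F hF
  · have ht1 : origC (node I g a t) = a := origC_node (good_of_le_bnd ha (by omega))
    have ht2 : origC (node I g a (t + 1)) = a := origC_node (good_of_le_bnd ha (by omega))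
    show (⟨(EF I g a t).rel, (EF I g a t).args.map (h0 ∘ origC)⟩ : Fact) ∈ T
    have : (EF I g a t).args.map (h0 ∘ origC) = [h0 a, h0 a] := by
      unfold EF
      simp [Function.comp, ht1, ht2]
    rw [this]
    have hrel : (EF I g a t).rel = eqRel := rfl
    rw [hrel]
    exact (hTeq (h0 a) (h0 a)).2 ⟨rfl, adomT_of_hom hh ha⟩

/-- All nodes of the chain of `a` are mapped to the same value by a homomorphism. -/
lemma chain_const {I T : Inst} {g : ℕ} {h : Const → Const} (hh : IsHom h (IG I g) T)
    (hTeq : TemplateHasEquality T) {a : ℕ} (ha : a ∈ adom I) :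
    ∀ s, s ≤ bnd I g a → h (node I g a s) = h (node I g a 0) := by
  intro s
  induction s with
  | zero => intro _; rfl
  | succ m ih =>
    intro hm
    have hEF : EF I g a m ∈ IG I g := mem_IG.2 (Or.inr ⟨a, ha, m, by omega, rfl⟩)
    have := hh _ hEF
    have himg : (⟨eqRel, [h (node I g a m), h (node I g a (m + 1))]⟩ : Fact) ∈ T := by
      simpa [EF] using this
    have heq2 := ((hTeq _ _).1 himg).1
    rw [← heq2]
    exact ih (by omega)

/-- Backward direction: a homomorphism `IG I g → T` yields one `I → T`. -/
lemma hom_back {I T : Inst} (g : ℕ) (hTeq : TemplateHasEquality T) (h : HomTo (IG I g) T) :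
    HomTo I T := by
  obtain ⟨h0, hh⟩ := h
  refine ⟨fun a => h0 (node I g a 0), ?_⟩
  intro F hF
  have hCF : CF F ∈ IG I g := mem_IG.2 (Or.inl ⟨F, hF, rfl⟩)
  have himg := hh _ hCF
  have hmap : F.args.map (fun a => h0 (node I g a 0)) = (CF F).args.map h0 := by
    unfold CF
    rw [List.map_map]
    rw [← map_range_getD F (fun a => h0 (node I g a 0))]
    apply List.map_congr_left
    intro i hi
    rw [List.mem_range] at hi
    -- show h0 (node I g (F.args.getD i 0) 0) = h0 (cOcc F i)
    set a := F.args.getD i 0 with hadef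
    have haI : a ∈ adom I := by
      refine mem_adom_iff.2 ⟨F, hF, ?_⟩
      rw [hadef, List.getD_eq_getElem _ _ hi]
      exact List.getElem_mem hi
    have hocc : (F, i) ∈ occs I a := mem_occs.2 ⟨hF, hi, rfl⟩
    obtain ⟨j, hj, hgetj⟩ := List.mem_iff_getElem.1 hocc
    have hmod : j * Lp g % Lp g = 0 := Nat.mul_mod_left j (Lp g)
    have hdiv : j * Lp g / Lp g = j := Nat.mul_div_cancel j (Lp_pos g)
    have hnode : node I g a (j * Lp g) = cOcc F i := by
      unfold node
      rw [if_pos hmod, hdiv, List.getD_eq_getElem _ _ hj, hgetj]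
    have hle : j * Lp g ≤ bnd I g a := by
      unfold bnd
      have : j ≤ (occs I a).length - 1 := by omega
      exact Nat.mul_le_mul_right _ this
    show h0 (node I g a 0) = h0 (cOcc F i)
    rw [← hnode]
    exact (chain_const hh hTeq haI _ hle).symm
  show (⟨F.rel, F.args.map _⟩ : Fact) ∈ T
  rw [hmap]
  exact himg

/-! #### Girth -/

lemma nodup_args_IG {I : Inst} {g : ℕ} {f : Fact} (hf : f ∈ IG I g) : f.args.Nodup := by
  rcases mem_IG.1 hf with ⟨F, hF, rfl⟩ | ⟨a, ha, t, ht, rfl⟩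
  · exact List.Nodup.map (fun i i' h => (cOcc_inj h).2) List.nodup_range
  · have hne : node I g a t ≠ node I g a (t + 1) := by
      intro h
      have := node_inj (good_of_le_bnd ha (by omega)) (good_of_le_bnd ha (by omega)) h
      omega
    simp [EF, List.nodup_cons, hne]

lemma getD_mem {f : Fact} {q : ℕ} (hq : q < f.args.length) : f.args.getD q 0 ∈ f.args := by
  rw [List.getD_eq_getElem _ _ hq]; exact List.getElem_mem hq

lemma getD_ne {f : Fact} (hnd : f.args.Nodup) {q q' : ℕ} (hq : q < f.args.length)
    (hq' : q' < f.args.length) (hne : q ≠ q') : f.args.getD q 0 ≠ f.args.getD q' 0 := by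
  rw [List.getD_eq_getElem _ _ hq, List.getD_eq_getElem _ _ hq']
  intro h
  exact hne ((hnd.getElem_inj_iff).1 h)

lemma EF_congr {I : Inst} {g a t t' : ℕ} (h : t = t') : EF I g a t = EF I g a t' := by rw [h]

lemma copy_copy {F F' : Fact} {x : ℕ} (hx : x ∈ (CF F).args) (hx' : x ∈ (CF F').args) :
    F = F' := by
  obtain ⟨i, _, rfl⟩ := mem_CF_args.1 hx
  obtain ⟨i', _, he⟩ := mem_CF_args.1 hx'
  exact (cOcc_inj he).1

lemma eq_eq_windows {I : Inst} {g a t a' t' x : ℕ} (ha : a ∈ adom I) (ht : t < bnd I g a)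
    (ha' : a' ∈ adom I) (ht' : t' < bnd I g a')
    (hx : x ∈ (EF I g a t).args) (hx' : x ∈ (EF I g a' t').args) :
    a = a' ∧ ∃ s, (s = t ∨ s = t + 1) ∧ (s = t' ∨ s = t' + 1) ∧ x = node I g a s := by
  obtain ⟨s, hw, hxs, hgs⟩ := mem_EF_node ha ht hx
  obtain ⟨s', hw', hxs', hgs'⟩ := mem_EF_node ha' ht' hx'
  have hnode : node I g a s = node I g a' s' := by rw [← hxs, ← hxs']
  obtain ⟨haa, hss⟩ := node_inj hgs hgs' hnode
  subst haa
  subst hss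
  exact ⟨rfl, s, hw, hw', hxs⟩

lemma copy_eq_adj {I : Inst} {g : ℕ} {F : Fact} {a t x : ℕ} (ha : a ∈ adom I)
    (ht : t < bnd I g a) (hx : x ∈ (CF F).args) (hx' : x ∈ (EF I g a t).args) :
    ∃ s i, (s = t ∨ s = t + 1) ∧ s % Lp g = 0 ∧ s / Lp g < (occs I a).length ∧
      (occs I a).getD (s / Lp g) junk = (F, i) ∧ x = node I g a s := by
  obtain ⟨i, _, rfl⟩ := mem_CF_args.1 hx
  obtain ⟨s, hw, hxs, hgs⟩ := mem_EF_node ha ht hx'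
  have h0 : s % Lp g = 0 := by
    by_contra h0
    rw [node, if_neg h0] at hxs
    exact cOcc_ne_cInt _ _ _ _ hxs
  have hlt := hgs h0
  have hget : (occs I a).getD (s / Lp g) junk = (F, i) := by
    have h3 := hxs
    rw [node, if_pos h0] at h3
    cases hy : (occs I a).getD (s / Lp g) junk with
    | mk G j =>
      rw [hy] at h3
      obtain ⟨h1, h2⟩ := cOcc_inj h3
      rw [h1, h2]
  exact ⟨s, i, hw, h0, hlt, hget, hxs⟩

lemma run_mono (v : ℕ → ℤ) (r : ℕ)
    (hstep : ∀ q, q + 1 < r → v (q + 1) = v q + 1 ∨ v (q + 1) = v q - 1)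
    (hinj : ∀ q q', q < r → q' < r → v q = v q' → q = q') :
    ∃ d : ℤ, (d = 1 ∨ d = -1) ∧ ∀ q < r, v q = v 0 + q * d := by
  by_cases hr : r ≤ 1
  · refine ⟨1, Or.inl rfl, fun q hq => ?_⟩
    have : q = 0 := by omega
    subst this
    simp
  push_neg at hr
  have hd : v 1 = v 0 + 1 ∨ v 1 = v 0 - 1 := by simpa using hstep 0 (by omega)
  set d : ℤ := v 1 - v 0 with hddef
  have hd1 : d = 1 ∨ d = -1 := by rcases hd with h | h <;> [left; right] <;> omega
  refine ⟨d, hd1, ?_⟩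
  intro q
  induction q using Nat.strong_induction_on with
  | _ q ih =>
    intro hq
    match q, ih, hq with
    | 0, _, _ => simp
    | 1, _, _ => push_cast; omega
    | (m + 2), ih, hq =>
      have h1 : v (m + 1) = v 0 + (m + 1 : ℕ) * d := ih (m + 1) (by omega) (by omega)
      have h0 : v m = v 0 + (m : ℕ) * d := ih m (by omega) (by omega)
      have hstep' : v (m + 2) = v (m + 1) + 1 ∨ v (m + 2) = v (m + 1) - 1 := by
        have := hstep (m + 1) (by omega)
        simpa [show m + 1 + 1 = m + 2 from rfl] using this
      have hgoal : v (m + 2) = v (m + 1) + d ∨ v (m + 2) = v (m + 1) - d := by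
        rcases hstep' with h | h <;> rcases hd1 with hd' | hd' <;> rw [hd'] <;> omega
      rcases hgoal with h | h
      · rw [h, h1]; push_cast; ring
      · exfalso
        have hvm : v (m + 2) = v m := by
          rw [h, h1, h0]; push_cast; ring
        have := hinj m (m + 2) (by omega) (by omega) hvm.symm
        omega

lemma girthGT_IG (I : Inst) (g : ℕ) : GirthGT (IG I g) g := by
  classical
  intro n hng hcyc
  obtain ⟨hn0, f, p, p', hmem, hdist, hpos, hshare⟩ := hcyc
  -- basic facts about positions
  have hnd : ∀ i < n, (f i).args.Nodup := fun i hi => nodup_args_IG (hmem i hi)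
  by_cases hn1 : n = 1
  · subst hn1
    have hs := hshare 0 (by omega)
    rw [show (0 + 1) % 1 = 0 by norm_num] at hs
    obtain ⟨hpne, hp1, hp2⟩ := hpos 0 (by omega)
    exact getD_ne (hnd 0 (by omega)) hp2 hp1 (Ne.symm hpne) hs
  have hn2 : 2 ≤ n := by omega
  have hsucclt : ∀ i, (i + 1) % n < n := fun i => Nat.mod_lt _ (by omega)
  have hsuccne : ∀ i < n, (i + 1) % n ≠ i := by
    intro i hi
    by_cases h : i + 1 = n
    · rw [h, Nat.mod_self]; omega
    · rw [Nat.mod_eq_of_lt (by omega)]; omega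
  have hedge : ∀ i < n, ∃ x, x ∈ (f i).args ∧ x ∈ (f ((i + 1) % n)).args ∧
      x = (f i).args.getD (p' i) 0 ∧ x = (f ((i + 1) % n)).args.getD (p ((i + 1) % n)) 0 := by
    intro i hi
    have hs := hshare i hi
    obtain ⟨_, _, hp2⟩ := hpos i hi
    obtain ⟨_, hq1, _⟩ := hpos _ (hsucclt i)
    exact ⟨(f i).args.getD (p' i) 0, getD_mem hp2, hs ▸ getD_mem hq1, rfl, hs⟩
  have hclass : ∀ i < n, (∃ F ∈ I, f i = CF F) ∨
      ∃ a ∈ adom I, ∃ t < bnd I g a, f i = EF I g a t :=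
    fun i hi => mem_IG.1 (hmem i hi)
  by_cases hallEq : ∀ i < n, ¬ ∃ F ∈ I, f i = CF F
  · -- Case A: all facts are equality facts
    have hEx : ∀ i, ∃ a t, i < n → a ∈ adom I ∧ t < bnd I g a ∧ f i = EF I g a t := by
      intro i
      by_cases hi : i < n
      · rcases hclass i hi with hc | ⟨a, ha, t, ht, hf⟩
        · exact absurd hc (hallEq i hi)
        · exact ⟨a, t, fun _ => ⟨ha, ht, hf⟩⟩
      · exact ⟨0, 0, fun h => absurd h hi⟩
    choose A Tt hAT using hEx
    have hadj : ∀ i < n, A ((i + 1) % n) = A i ∧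
        (Tt ((i + 1) % n) = Tt i + 1 ∨ Tt i = Tt ((i + 1) % n) + 1) := by
      intro i hi
      obtain ⟨ha, ht, hfi⟩ := hAT i hi
      obtain ⟨ha', ht', hfj⟩ := hAT _ (hsucclt i)
      obtain ⟨x, hx1, hx2, _, _⟩ := hedge i hi
      rw [hfi] at hx1
      rw [hfj] at hx2
      obtain ⟨haa, s, hw, hw', _⟩ := eq_eq_windows ha ht ha' ht' hx1 hx2
      have htne : Tt i ≠ Tt ((i + 1) % n) := by
        intro he
        have : f i = f ((i + 1) % n) := by rw [hfi, hfj, ← haa, he]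
        exact hsuccne i hi (hdist _ _ (hsucclt i) hi this.symm)
      exact ⟨haa.symm, by omega⟩
    have hAconst : ∀ i < n, A i = A 0 := by
      intro i
      induction i with
      | zero => intro _; rfl
      | succ m ih =>
        intro h
        have h2 := (hadj m (by omega)).1
        rw [Nat.mod_eq_of_lt h] at h2
        rw [h2]
        exact ih (by omega)
    by_cases hn2' : n = 2
    · subst hn2'
      obtain ⟨ha0, ht0, hf0⟩ := hAT 0 (by omega)
      obtain ⟨ha1, ht1, hf1⟩ := hAT 1 (by omega)
      obtain ⟨x0, hx01, hx02, hx0d, _⟩ := hedge 0 (by omega)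
      obtain ⟨x1, hx11, hx12, _, hx1d⟩ := hedge 1 (by omega)
      rw [show (0 + 1) % 2 = 1 by norm_num] at hx02
      rw [show (1 + 1) % 2 = 0 by norm_num] at hx12 hx1d
      rw [hf0] at hx01 hx12
      rw [hf1] at hx02 hx11
      obtain ⟨_, s0, hw0, hw0', hn0'⟩ := eq_eq_windows ha0 ht0 ha1 ht1 hx01 hx02
      obtain ⟨haa, s1, hw1, hw1', hn1'⟩ := eq_eq_windows ha0 ht0 ha1 ht1 hx12 hx11
      have hx01ne : x0 ≠ x1 := by
        have h1 := (hpos 0 (by omega)).1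
        obtain ⟨_, hp1, hp2⟩ := hpos 0 (by omega)
        rw [hx0d, hx1d]
        exact getD_ne (hnd 0 (by omega)) hp2 hp1 (Ne.symm h1)
      have hs01 : s0 ≠ s1 := by
        intro h
        apply hx01ne
        rw [hn0', hn1', h]
      have hTeq : Tt 0 = Tt 1 := by omega
      have : f 0 = f 1 := by rw [hf0, hf1, ← haa, hTeq]
      have := hdist 0 1 (by omega) (by omega) this
      omega
    -- n ≥ 3 : maximum argument
    have hn3 : 3 ≤ n := by omega
    obtain ⟨im, himmem, hmax⟩ := Finset.exists_max_image (Finset.range n) Tt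
      ⟨0, Finset.mem_range.2 (by omega)⟩
    rw [Finset.mem_range] at himmem
    have hmax' : ∀ i < n, Tt i ≤ Tt im := fun i hi => hmax i (Finset.mem_range.2 hi)
    have had1 := hadj im himmem
    obtain ⟨haj1, htj1, hfj1⟩ := hAT ((im + 1) % n) (hsucclt im)
    obtain ⟨j2, hj2lt, hj2succ⟩ : ∃ j2, j2 < n ∧ (j2 + 1) % n = im := by
      by_cases h : im = 0
      · exact ⟨n - 1, by omega, by rw [show n - 1 + 1 = n by omega, Nat.mod_self, h]⟩
      · exact ⟨im - 1, by omega,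
          by rw [show im - 1 + 1 = im by omega]; exact Nat.mod_eq_of_lt himmem⟩
    have had2 := hadj j2 hj2lt
    rw [hj2succ] at had2
    obtain ⟨haj2, htj2, hfj2⟩ := hAT j2 hj2lt
    have ht1 : Tt im = Tt ((im + 1) % n) + 1 := by
      rcases had1.2 with h | h
      · exfalso; have := hmax' _ (hsucclt im); omega
      · exact h
    have ht2 : Tt im = Tt j2 + 1 := by
      rcases had2.2 with h | h
      · exact h
      · exfalso; have := hmax' j2 hj2lt; omega
    have hfeq : f ((im + 1) % n) = f j2 := by
      rw [hfj1, hfj2, hAconst _ (hsucclt im), hAconst j2 hj2lt]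
      exact EF_congr (by omega)
    have hj12 := hdist _ _ (hsucclt im) hj2lt hfeq
    by_cases h : im + 1 = n
    · rw [h, Nat.mod_self] at hj12
      rw [← hj12] at hj2succ
      rw [Nat.mod_eq_of_lt (by omega)] at hj2succ
      omega
    · rw [Nat.mod_eq_of_lt (by omega)] at hj12
      rw [← hj12] at hj2succ
      by_cases h2 : im + 1 + 1 = n
      · rw [h2, Nat.mod_self] at hj2succ
        omega
      · rw [Nat.mod_eq_of_lt (by omega)] at hj2succ
        omega
  · -- Case B: some copy fact occurs
    push_neg at hallEq
    obtain ⟨i0, hi0n, F0, hF0I, hf_i0⟩ := hallEq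
    have hltq : ∀ q, (i0 + q) % n < n := fun q => Nat.mod_lt _ (by omega)
    have hFinj : ∀ q q', q < n → q' < n → f ((i0 + q) % n) = f ((i0 + q') % n) → q = q' := by
      intro q q' hq hq' he
      have hmn := hdist _ _ (hltq q) (hltq q') he
      have h1 : q ≡ q' [MOD n] := Nat.ModEq.add_left_cancel' i0 hmn
      have h2 : q % n = q' % n := h1
      rwa [Nat.mod_eq_of_lt hq, Nat.mod_eq_of_lt hq'] at h2
    have hFq0 : f ((i0 + 0) % n) = CF F0 := by
      rw [Nat.add_zero, Nat.mod_eq_of_lt hi0n]; exact hf_i0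
    have hFqn : f ((i0 + n) % n) = CF F0 := by
      rw [Nat.add_mod_right, Nat.mod_eq_of_lt hi0n]; exact hf_i0
    have hedgeq : ∀ q, ∃ x, x ∈ (f ((i0 + q) % n)).args ∧ x ∈ (f ((i0 + (q + 1)) % n)).args ∧
        x = (f ((i0 + q) % n)).args.getD (p' ((i0 + q) % n)) 0 ∧
        x = (f ((i0 + (q + 1)) % n)).args.getD (p ((i0 + (q + 1)) % n)) 0 := by
      intro q
      obtain ⟨x, h1, h2, h3, h4⟩ := hedge _ (hltq q)
      have hm : ((i0 + q) % n + 1) % n = (i0 + (q + 1)) % n := by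
        rw [Nat.mod_add_mod, Nat.add_assoc]
      rw [hm] at h2 h4
      exact ⟨x, h1, h2, h3, h4⟩
    have hex : ∃ q, 0 < q ∧ q ≤ n ∧ ∃ F ∈ I, f ((i0 + q) % n) = CF F :=
      ⟨n, by omega, le_refl n, F0, hF0I, hFqn⟩
    set r := Nat.find hex with hrdef
    obtain ⟨hr0, hrn, F1, hF1I, hFqr⟩ := Nat.find_spec hex
    rw [← hrdef] at hr0 hrn hFqr
    have hrmin : ∀ q, 0 < q → q < r → ¬ ∃ F ∈ I, f ((i0 + q) % n) = CF F := by
      intro q h1 h2 hC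
      exact Nat.find_min hex h2 ⟨h1, by omega, hC⟩
    have hr2 : 2 ≤ r := by
      by_contra hcon
      have hr1 : r = 1 := by omega
      obtain ⟨x, hx1, hx2, _, _⟩ := hedgeq 0
      rw [hFq0] at hx1
      simp only [Nat.zero_add] at hx2
      rw [hr1] at hFqr
      rw [hFqr] at hx2
      have hcc : F0 = F1 := copy_copy hx1 hx2
      have heqf : f ((i0 + 0) % n) = f ((i0 + 1) % n) := by rw [hFq0, hFqr, hcc]
      have := hFinj 0 1 (by omega) (by omega) heqf
      omega
    have hrunEx : ∀ q, ∃ a t, 0 < q → q < r → a ∈ adom I ∧ t < bnd I g a ∧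
        f ((i0 + q) % n) = EF I g a t := by
      intro q
      by_cases hq : 0 < q ∧ q < r
      · rcases hclass _ (hltq q) with hc | ⟨a, ha, t, ht, hf⟩
        · exact absurd hc (hrmin q hq.1 hq.2)
        · exact ⟨a, t, fun _ _ => ⟨ha, ht, hf⟩⟩
      · exact ⟨0, 0, fun h1 h2 => absurd ⟨h1, h2⟩ hq⟩
    choose A Tt hAT using hrunEx
    have hadj : ∀ q, 0 < q → q + 1 < r → A (q + 1) = A q ∧
        (Tt (q + 1) = Tt q + 1 ∨ Tt q = Tt (q + 1) + 1) := by
      intro q h1 h2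
      obtain ⟨ha, ht, hfq⟩ := hAT q h1 (by omega)
      obtain ⟨ha', ht', hfq'⟩ := hAT (q + 1) (by omega) h2
      obtain ⟨x, hx1, hx2, _, _⟩ := hedgeq q
      rw [hfq] at hx1
      rw [hfq'] at hx2
      obtain ⟨haa, s, hw, hw', _⟩ := eq_eq_windows ha ht ha' ht' hx1 hx2
      have htne : Tt q ≠ Tt (q + 1) := by
        intro he
        have heqf : f ((i0 + q) % n) = f ((i0 + (q + 1)) % n) := by
          rw [hfq, hfq', ← haa, he]
        have := hFinj q (q + 1) (by omega) (by omega) heqf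
        omega
      exact ⟨haa.symm, by omega⟩
    have hAconst : ∀ q, 0 < q → q < r → A q = A 1 := by
      intro q
      induction q with
      | zero => intro h _; omega
      | succ m ih =>
        intro _ hlt2
        by_cases hm : m = 0
        · subst hm; rfl
        · have h2 := (hadj m (by omega) (by omega)).1
          rw [h2]
          exact ih (by omega) (by omega)
    have hstepv : ∀ q, q + 1 < r - 1 →
        (fun q => (Tt (q + 1) : ℤ)) (q + 1) = (fun q => (Tt (q + 1) : ℤ)) q + 1 ∨
        (fun q => (Tt (q + 1) : ℤ)) (q + 1) = (fun q => (Tt (q + 1) : ℤ)) q - 1 := by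
      intro q hq
      simp only []
      rcases (hadj (q + 1) (by omega) (by omega)).2 with h | h
      · left; omega
      · right; omega
    have hinjv : ∀ q q', q < r - 1 → q' < r - 1 →
        (fun q => (Tt (q + 1) : ℤ)) q = (fun q => (Tt (q + 1) : ℤ)) q' → q = q' := by
      intro q q' hq hq' he
      simp only [] at he
      have heN : Tt (q + 1) = Tt (q' + 1) := by exact_mod_cast he
      obtain ⟨ha, ht, hfq⟩ := hAT (q + 1) (by omega) (by omega)
      obtain ⟨ha', ht', hfq'⟩ := hAT (q' + 1) (by omega) (by omega)
      have hAeq : A (q + 1) = A (q' + 1) := by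
        rw [hAconst (q + 1) (by omega) (by omega), hAconst (q' + 1) (by omega) (by omega)]
      have heqf : f ((i0 + (q + 1)) % n) = f ((i0 + (q' + 1)) % n) := by
        rw [hfq, hfq', hAeq, heN]
      have := hFinj (q + 1) (q' + 1) (by omega) (by omega) heqf
      omega
    obtain ⟨d, hd1, hv⟩ := run_mono (fun q => (Tt (q + 1) : ℤ)) (r - 1) hstepv hinjv
    have hTlast : (Tt (r - 1) : ℤ) = Tt 1 + (r - 2 : ℕ) * d := by
      have h := hv (r - 2) (by omega)
      rw [show r - 2 + 1 = r - 1 by omega] at h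
      rw [h]
    -- flank 1
    obtain ⟨x0, hx01, hx02, hx0d, _⟩ := hedgeq 0
    simp only [Nat.zero_add] at hx02
    rw [hFq0] at hx01
    obtain ⟨ha1, ht1b, hfq1⟩ := hAT 1 (by omega) (by omega)
    rw [hfq1] at hx02
    obtain ⟨s, ic, hsw, hsmod, hslt, hsget, hxnode⟩ := copy_eq_adj ha1 ht1b hx01 hx02
    -- flank 2
    obtain ⟨x1, hx11, hx12, hx1d, hx1d'⟩ := hedgeq (r - 1)
    rw [show r - 1 + 1 = r by omega] at hx12 hx1d'
    rw [hFqr] at hx12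
    obtain ⟨har, htrb, hfqr1⟩ := hAT (r - 1) (by omega) (by omega)
    rw [hfqr1] at hx11
    have hAr : A (r - 1) = A 1 := hAconst (r - 1) (by omega) (by omega)
    rw [hAr] at hx11 htrb
    obtain ⟨s', ic', hsw', hsmod', hslt', hsget', hxnode'⟩ := copy_eq_adj ha1 htrb hx12 hx11
    by_cases hss : s = s'
    · have hocc_eq : (F0, ic) = (F1, ic') := by
        rw [← hsget, ← hsget', hss]
      have hF01 : F0 = F1 := congrArg Prod.fst hocc_eq
      by_cases hrn' : r = n
      · have hxeq : x0 = x1 := by rw [hxnode, hxnode', hss]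
        have hmod0 : (i0 + 0) % n = i0 := by rw [Nat.add_zero, Nat.mod_eq_of_lt hi0n]
        have hmodr : (i0 + r) % n = i0 := by
          rw [hrn', Nat.add_mod_right, Nat.mod_eq_of_lt hi0n]
        rw [hmod0] at hx0d
        rw [hmodr] at hx1d'
        obtain ⟨hpne, hp1, hp2⟩ := hpos i0 hi0n
        have hne := getD_ne (hnd i0 hi0n) hp2 hp1 (Ne.symm hpne)
        rw [← hx0d, ← hx1d'] at hne
        exact hne hxeq
      · have heqf : f ((i0 + 0) % n) = f ((i0 + r) % n) := by
          rw [hFq0, hFqr, hF01]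
        have := hFinj 0 r (by omega) (by omega) heqf
        omega
    · have hdvd : Lp g ∣ s := Nat.dvd_of_mod_eq_zero hsmod
      have hdvd' : Lp g ∣ s' := Nat.dvd_of_mod_eq_zero hsmod'
      have hgap : Lp g ≤ s' - s ∨ Lp g ≤ s - s' := by
        rcases Nat.lt_or_ge s s' with h | h
        · left; exact Nat.le_of_dvd (by omega) (Nat.dvd_sub hdvd' hdvd)
        · right
          have : s' < s := by omega
          exact Nat.le_of_dvd (by omega) (Nat.dvd_sub hdvd hdvd')
      have hLval : Lp g = g + 2 := rfl
      rcases hd1 with hd | hd <;> rw [hd] at hTlast <;>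
        rcases hsw with h1 | h1 <;> rcases hsw' with h2 | h2 <;>
        rcases hgap with h3 | h3 <;> omega

end S10

/-- Lem. 6.2: for every instance over a schema with `eq` and every `g`,
there is an instance of girth exceeding `g` that maps to exactly the same templates with
equality. -/
theorem statement_10 (SE : Schema) (heq : HasEqualitySchema SE)
    (I : Inst) (hI : SE.IsInstance I) (g : ℕ) :
    ∃ Ig : Inst, SE.IsInstance Ig ∧ GirthGT Ig g ∧
      ∀ T : Inst, SE.IsInstance T → TemplateHasEquality T →
        (HomTo Ig T ↔ HomTo I T) := by
  refine ⟨S10.IG I g, S10.isInstance_IG heq hI g, S10.girthGT_IG I g, ?_⟩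
  intro T hT hTeq
  exact ⟨S10.hom_back g hTeq, S10.hom_fwd g hTeq⟩
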